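/- Let g(x,y) = (x-100)·(x³ + 4x²(y-125) + x(3y² - 1100y + 70000) + 10000y) / ((x+y-200)³·(x+y)) for 0 < x, y < 100. Then (x,y) = (50,50) satisfies ∂g/∂x = 0 and ∂g/∂y = 0. -/

import Mathlib

theorem stmt_11 :
    let g : ℝ → ℝ → ℝ := fun x y =>
      (x - 100) *
          (x ^ 3 + 4 * x ^ 2 * (y - 125) + x * (3 * y ^ 2 - 1100 * y + 70000) +
            10000 * y) /
        ((x + y - 200) ^ 3 * (x + y))
    deriv (fun x => g x 50) 50 = 0 ∧ deriv (fun y => g 50 y) 50 = 0 := by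
  intro g
  constructor
  · show deriv (fun x : ℝ =>
      (x - 100) *
          (x ^ 3 + 4 * x ^ 2 * ((50:ℝ) - 125) + x * (3 * (50:ℝ) ^ 2 - 1100 * 50 + 70000) +
            10000 * 50) /
        ((x + 50 - 200) ^ 3 * (x + 50))) 50 = 0
    have hNum : HasDerivAt (fun x : ℝ =>
        (x - 100) *
          (x ^ 3 + 4 * x ^ 2 * ((50:ℝ) - 125) + x * (3 * (50:ℝ) ^ 2 - 1100 * 50 + 70000) +
            10000 * 50))
        (1 * ((50:ℝ) ^ 3 + 4 * 50 ^ 2 * (50 - 125) + 50 * (3 * 50 ^ 2 - 1100 * 50 + 70000) +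
            10000 * 50) +
          (50 - 100) * ((3 * (50:ℝ) ^ 2 * 1 + (4 * (2 * 50 ^ 1 * 1)) * (50 - 125) +
            1 * (3 * (50:ℝ) ^ 2 - 1100 * 50 + 70000)))) 50 := by
      exact ((hasDerivAt_id (50:ℝ)).sub_const 100).mul
        ((((hasDerivAt_id (50:ℝ)).pow 3).add
          ((((hasDerivAt_id (50:ℝ)).pow 2).const_mul 4).mul_const _)).add
          ((hasDerivAt_id (50:ℝ)).mul_const _) |>.add_const _)
    have hDen : HasDerivAt (fun x : ℝ => (x + 50 - 200) ^ 3 * (x + 50))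
        ((3 * ((50:ℝ) + 50 - 200) ^ 2 * 1) * (50 + 50) + ((50:ℝ) + 50 - 200) ^ 3 * 1) 50 := by
      exact ((((hasDerivAt_id (50:ℝ)).add_const 50).sub_const 200).pow 3).mul
        ((hasDerivAt_id (50:ℝ)).add_const 50)
    have hne : (((50:ℝ) + 50 - 200) ^ 3 * (50 + 50)) ≠ 0 := by norm_num
    have H := hNum.div hDen hne
    erw [H.deriv]
    norm_num
  · show deriv (fun y : ℝ =>
      ((50:ℝ) - 100) *
          ((50:ℝ) ^ 3 + 4 * (50:ℝ) ^ 2 * (y - 125) + 50 * (3 * y ^ 2 - 1100 * y + 70000) +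
            10000 * y) /
        (((50:ℝ) + y - 200) ^ 3 * (50 + y))) 50 = 0
    have hNum : HasDerivAt (fun y : ℝ =>
        ((50:ℝ) - 100) *
          ((50:ℝ) ^ 3 + 4 * (50:ℝ) ^ 2 * (y - 125) + 50 * (3 * y ^ 2 - 1100 * y + 70000) +
            10000 * y))
        (((50:ℝ) - 100) * (4 * (50:ℝ) ^ 2 * 1 + 50 * (3 * (2 * (50:ℝ) ^ 1 * 1) - 1100 * 1) +
          10000 * 1)) 50 := by
      have hq : HasDerivAt (fun y : ℝ => 3 * y ^ 2 - 1100 * y + 70000)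
          (3 * (2 * (50:ℝ) ^ 1 * 1) - 1100 * 1) 50 :=
        ((((hasDerivAt_id (50:ℝ)).pow 2).const_mul 3).sub
          ((hasDerivAt_id (50:ℝ)).const_mul 1100)).add_const 70000
      exact ((((((hasDerivAt_id (50:ℝ)).sub_const 125).const_mul
        (4 * (50:ℝ) ^ 2)).const_add ((50:ℝ) ^ 3)).add
        (hq.const_mul 50)).add
        ((hasDerivAt_id (50:ℝ)).const_mul 10000)).const_mul ((50:ℝ) - 100)
    have hDen : HasDerivAt (fun y : ℝ => ((50:ℝ) + y - 200) ^ 3 * (50 + y))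
        ((3 * ((50:ℝ) + 50 - 200) ^ 2 * 1) * (50 + 50) + ((50:ℝ) + 50 - 200) ^ 3 * 1) 50 := by
      exact ((((hasDerivAt_id (50:ℝ)).const_add 50).sub_const 200).pow 3).mul
        ((hasDerivAt_id (50:ℝ)).const_add 50)
    have hne : (((50:ℝ) + 50 - 200) ^ 3 * (50 + 50)) ≠ 0 := by norm_num
    have H := hNum.div hDen hne
    erw [H.deriv]
    norm_num
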